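/- arXiv:2005.05134 — 2 statements merged into one kernel-verified Lean document; each statement's English description precedes it below -/
import Mathlib

section
/- The map κ : OnePoint ℝ → AddCircle 1 defined by κ(x) = k(x) mod ℤ for real x ∉ {0, 1}, and κ(0) = κ(1) = κ(∞) = 0, is continuous on the one-point compactification of ℝ. -/
open OnePoint Filter Topology Set

/-- The piecewise map `k`: `k(x) = 1/(1-x)` for `x < 0`, `k(x) = x` for
`0 < x < 1`, `k(x) = 1 - 1/x` for `x > 1`. -/
noncomputable def k (x : ℝ) : ℝ :=
  if x < 0 then 1 / (1 - x) else if x < 1 then x else 1 - 1 / x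

/-- The map `κ : ℝ₊ = ℙ¹(ℝ) → ℝ/ℤ`, sending a real `x ∉ {0,1}` to `k(x) mod ℤ`
and `0, 1, ∞` to `0`. -/
noncomputable def kappa : OnePoint ℝ → AddCircle (1 : ℝ) :=
  fun p => Option.elim p 0 (fun x => if x = 0 ∨ x = 1 then 0 else (k x : AddCircle (1 : ℝ)))

noncomputable def kf (x : ℝ) : AddCircle (1 : ℝ) := (k x : AddCircle (1 : ℝ))

lemma k_zero : k 0 = 0 := by simp [k]
lemma k_one : k 1 = 0 := by norm_num [k]

lemma kappa_coe (x : ℝ) : kappa x = kf x := by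
  simp only [kappa, kf, Option.elim]
  split_ifs with h
  · rcases h with h | h <;> simp [h, k_zero, k_one]
  · rfl

lemma mk_cont : Continuous (fun x : ℝ => (x : AddCircle (1:ℝ))) := continuous_quotient_mk'

lemma coe_one_eq_zero : ((1 : ℝ) : AddCircle (1:ℝ)) = 0 := AddCircle.coe_period 1
lemma coe_zero_eq_zero : ((0 : ℝ) : AddCircle (1:ℝ)) = 0 := by
  exact (QuotientAddGroup.mk_zero _)

lemma aux {g : ℝ → ℝ} {l : Filter ℝ} {c : ℝ} (hg : Tendsto g l (𝓝 c))
    (h : ∀ᶠ y in l, k y = g y) :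
    Tendsto kf l (𝓝 ((c : ℝ) : AddCircle (1:ℝ))) := by
  have h2 : Tendsto (fun y => ((g y : ℝ) : AddCircle (1:ℝ))) l (𝓝 (c : AddCircle (1:ℝ))) :=
    (mk_cont.tendsto c).comp hg
  exact (tendsto_congr' (h.mono fun y hy => by simp [kf, hy])).mpr h2

lemma cont_inv_one_sub {x : ℝ} (hx : x ≠ 1) :
    ContinuousAt (fun y : ℝ => 1 / (1 - y)) x := by
  apply ContinuousAt.div continuousAt_const (continuousAt_const.sub continuousAt_id)
  intro h; apply hx; have := sub_eq_zero.mp h; simp only [id_eq] at this; linarith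

lemma cont_one_sub_inv {x : ℝ} (hx : x ≠ 0) :
    ContinuousAt (fun y : ℝ => 1 - 1 / y) x :=
  continuousAt_const.sub (ContinuousAt.div continuousAt_const continuousAt_id hx)

lemma kf_cont : Continuous kf := by
  rw [continuous_iff_continuousAt]
  intro x
  rcases lt_trichotomy x 0 with hx | rfl | hx
  · -- x < 0
    have hfx : kf x = ((1 / (1 - x) : ℝ) : AddCircle (1:ℝ)) := by
      simp [kf, k, hx]
    rw [ContinuousAt, hfx]
    refine aux (cont_inv_one_sub (by linarith)) ?_
    filter_upwards [Iio_mem_nhds hx] with y hy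
    rw [mem_Iio] at hy
    simp [k, hy]
  · -- x = 0
    rw [ContinuousAt, ← nhdsLT_sup_nhdsGE (0:ℝ), tendsto_sup]
    have hf0 : kf 0 = ((0:ℝ) : AddCircle (1:ℝ)) := by simp [kf, k_zero]
    rw [hf0]
    constructor
    · have h1 : Tendsto (fun y : ℝ => 1 / (1 - y)) (𝓝[<] (0:ℝ)) (𝓝 1) := by
        have := (cont_inv_one_sub (by norm_num : (0:ℝ) ≠ 1)).tendsto
        simpa using this.mono_left nhdsWithin_le_nhds
      have := aux h1 (by
          filter_upwards [self_mem_nhdsWithin] with y (hy : y < 0); simp [k, hy])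
      rwa [coe_one_eq_zero, ← coe_zero_eq_zero] at this
    · refine aux (tendsto_id.mono_left nhdsWithin_le_nhds) ?_
      have hmem : Ici (0:ℝ) ∩ Iio 1 ∈ 𝓝[≥] (0:ℝ) :=
        inter_mem self_mem_nhdsWithin (mem_nhdsWithin_of_mem_nhds (Iio_mem_nhds one_pos))
      filter_upwards [hmem] with y hy
      obtain ⟨hy1, hy2⟩ := hy
      rw [mem_Ici] at hy1; rw [mem_Iio] at hy2
      simp [k, not_lt.2 hy1, hy2]
  · rcases lt_trichotomy x 1 with hx1 | rfl | hx1
    · -- 0 < x < 1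
      have hfx : kf x = ((x : ℝ) : AddCircle (1:ℝ)) := by
        simp [kf, k, not_lt.2 hx.le, hx1]
      rw [ContinuousAt, hfx]
      refine aux tendsto_id ?_
      filter_upwards [Ioo_mem_nhds hx hx1] with y hy
      simp [k, not_lt.2 hy.1.le, hy.2]
    · -- x = 1
      rw [ContinuousAt, ← nhdsLT_sup_nhdsGE (1:ℝ), tendsto_sup]
      have hf1 : kf 1 = ((0:ℝ) : AddCircle (1:ℝ)) := by simp [kf, k_one]
      rw [hf1]
      constructor
      · have h1 : Tendsto (fun y : ℝ => y) (𝓝[<] (1:ℝ)) (𝓝 1) :=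
          tendsto_id.mono_left nhdsWithin_le_nhds
        have hmem : Iio (1:ℝ) ∩ Ioi 0 ∈ 𝓝[<] (1:ℝ) :=
          inter_mem self_mem_nhdsWithin (mem_nhdsWithin_of_mem_nhds (Ioi_mem_nhds one_pos))
        have := aux h1 (by
          filter_upwards [hmem] with y hy
          obtain ⟨hy1, hy2⟩ := hy
          rw [mem_Iio] at hy1; rw [mem_Ioi] at hy2
          simp [k, not_lt.2 hy2.le, hy1])
        rwa [coe_one_eq_zero, ← coe_zero_eq_zero] at this
      · have h1 : Tendsto (fun y : ℝ => 1 - 1 / y) (𝓝[≥] (1:ℝ)) (𝓝 0) := by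
          have := (cont_one_sub_inv (by norm_num : (1:ℝ) ≠ 0)).tendsto
          simp only [one_div, inv_one, sub_self] at this
          simpa using this.mono_left nhdsWithin_le_nhds
        refine aux h1 ?_
        filter_upwards [self_mem_nhdsWithin] with y (hy : (1:ℝ) ≤ y)
        simp [k, not_lt.2 (by linarith : (0:ℝ) ≤ y), not_lt.2 hy]
    · -- x > 1
      have hfx : kf x = ((1 - 1 / x : ℝ) : AddCircle (1:ℝ)) := by
        simp [kf, k, not_lt.2 (by linarith : (0:ℝ) ≤ x), not_lt.2 hx1.le]
      rw [ContinuousAt, hfx]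
      refine aux (cont_one_sub_inv (by linarith)) ?_
      filter_upwards [Ioi_mem_nhds hx1] with y hy
      rw [mem_Ioi] at hy
      simp [k, not_lt.2 (by linarith : (0:ℝ) ≤ y), not_lt.2 (le_of_lt hy)]

lemma kf_infty : Tendsto kf (coclosedCompact ℝ) (𝓝 0) := by
  rw [Filter.coclosedCompact_eq_cocompact, cocompact_eq_atBot_atTop]
  rw [tendsto_sup]
  constructor
  · have h1 : Tendsto (fun y : ℝ => 1 / (1 - y)) atBot (𝓝 0) := by
      simp only [one_div]
      apply tendsto_inv_atTop_zero.comp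
      have : Tendsto (fun y : ℝ => -y) atBot atTop := tendsto_neg_atBot_atTop
      have := tendsto_atTop_add_const_left atBot 1 this
      exact this.congr (fun y => by ring)
    have := aux h1 (by
      filter_upwards [Iio_mem_atBot (0:ℝ)] with y hy
      rw [mem_Iio] at hy; simp [k, hy])
    rwa [coe_zero_eq_zero] at this
  · have h1 : Tendsto (fun y : ℝ => 1 - 1 / y) atTop (𝓝 1) := by
      have : Tendsto (fun y : ℝ => 1 / y) atTop (𝓝 0) := by
        simpa [one_div] using tendsto_inv_atTop_zero
      simpa using tendsto_const_nhds.sub this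
    have := aux h1 (by
      filter_upwards [Ioi_mem_atTop (1:ℝ)] with y hy
      rw [mem_Ioi] at hy
      simp [k, not_lt.2 (by linarith : (0:ℝ) ≤ y), not_lt.2 (le_of_lt hy)])
    rwa [coe_one_eq_zero] at this

/-- `κ` is continuous on the one-point compactification of `ℝ`. -/
theorem kappa_continuous : Continuous kappa := by
  rw [OnePoint.continuous_iff]
  have hco : (fun x : ℝ => kappa x) = kf := funext kappa_coe
  have hinf : kappa ∞ = 0 := rfl
  rw [hco, hinf]
  exact ⟨kf_infty, kf_cont⟩
end

section
/- For a real number x, the point ℓ(x) is a root of unity (i.e. ℓ(x)ⁿ = 1 for some positive integer n) if and only if there exists a rational number q with cos(πq) ≠ 0 such that x = tan(πq); thus the torsion subgroup ℚ/ℤ of the circle corresponds under ℓ to the set {tan(πq) : q ∈ ℚ} of cyclotomic algebraic numbers together with ∞. -/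
open Complex OnePoint Real

lemma one_sub_I_mul_ne (t : ℝ) : (1 : ℂ) - I * t ≠ 0 := by
  intro h
  have := congrArg Complex.re h
  simp at this

lemma lemA (θ : ℝ) (h : Real.cos θ ≠ 0) :
    (1 + I * (Real.tan θ : ℂ)) / (1 - I * Real.tan θ) = Complex.exp (2 * θ * I) := by
  have hc : Complex.cos θ ≠ 0 := by
    rw [← Complex.ofReal_cos]; exact_mod_cast h
  have h1 : (1 : ℂ) + I * Real.tan θ = Complex.exp (θ * I) / Complex.cos θ := by
    rw [Real.tan_eq_sin_div_cos, Complex.exp_mul_I]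
    push_cast
    field_simp
  have h2 : (1 : ℂ) - I * Real.tan θ = Complex.exp (-θ * I) / Complex.cos θ := by
    rw [Real.tan_eq_sin_div_cos, Complex.exp_mul_I]
    push_cast
    rw [Complex.cos_neg, Complex.sin_neg]
    field_simp
    ring
  rw [h1, h2]
  rw [div_div_div_comm, div_self hc, ← Complex.exp_sub]
  ring_nf

lemma inj_lem (a b : ℝ) (h : (1 + I * (a:ℂ)) / (1 - I * a) = (1 + I * b) / (1 - I * b)) :
    a = b := by
  rw [div_eq_div_iff (one_sub_I_mul_ne a) (one_sub_I_mul_ne b)] at h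
  have := congrArg Complex.im h
  simp [Complex.ext_iff] at this
  linarith

/-- The map `ℓ : ℝ₊ = ℙ¹(ℝ) → ℂ`, `ℓ(x) = (1 + ix)/(1 - ix)` for real `x`
and `ℓ(∞) = -1`. -/
noncomputable def ell : OnePoint ℝ → ℂ :=
  fun p => Option.elim p (-1) (fun x : ℝ => (1 + I * x) / (1 - I * x))

lemma ell_coe (x : ℝ) : ell ((x : ℝ) : OnePoint ℝ) = (1 + I * x) / (1 - I * x) := rfl

/-- For real `x`, `ℓ(x)` is a root of unity iff `x = tan(πq)` for some
rational `q` with `cos(πq) ≠ 0`: the torsion subgroup `ℚ/ℤ` of the circle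
corresponds under `ℓ` to the cyclotomic algebraic numbers `tan(πq)`. -/
theorem ell_root_of_unity_iff_tan_rat (x : ℝ) :
    (∃ n : ℕ, 0 < n ∧ ell ((x : ℝ) : OnePoint ℝ) ^ n = 1) ↔
    (∃ q : ℚ, Real.cos (π * q) ≠ 0 ∧ x = Real.tan (π * q)) := by
  constructor
  · rintro ⟨n, hn, hzn⟩
    rw [ell_coe] at hzn
    set z : ℂ := (1 + I * x) / (1 - I * x) with hzdef
    have hnum : (1 : ℂ) + I * x ≠ 0 := by
      intro h
      have := congrArg Complex.re h
      simp at this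
    have hconj : (1 : ℂ) - I * x = starRingEnd ℂ (1 + I * x) := by
      simp [Complex.ext_iff]
    have habs : ‖z‖ = 1 := by
      rw [hzdef, norm_div, hconj, Complex.norm_conj, div_self (norm_ne_zero_iff.mpr hnum)]
    have hz1 : z = Complex.exp (z.arg * I) := by
      conv_lhs => rw [← Complex.norm_mul_exp_arg_mul_I z]
      rw [habs]
      push_cast
      rw [one_mul]
    have hexp : Complex.exp (↑n * (↑z.arg * I)) = 1 := by
      rw [Complex.exp_nat_mul, ← hz1]
      exact hzn
    obtain ⟨m, hm⟩ := Complex.exp_eq_one_iff.mp hexp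
    have hre : (n : ℝ) * z.arg = m * (2 * π) := by
      have h2 : ((n * z.arg : ℝ) : ℂ) * I = ((m * (2 * π) : ℝ) : ℂ) * I := by
        push_cast
        linear_combination hm
      exact_mod_cast mul_right_cancel₀ Complex.I_ne_zero h2
    have hnR : (n : ℝ) ≠ 0 := Nat.cast_ne_zero.mpr hn.ne'
    set q : ℚ := (m : ℚ) / (n : ℚ) with hqdef
    have hqcast : (q : ℝ) = (m : ℝ) / (n : ℝ) := by rw [hqdef]; push_cast; ring
    have hq : 2 * (π * (q : ℝ)) = z.arg := by
      rw [hqcast]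
      field_simp
      linarith [hre]
    have hzq : z = Complex.exp (((2 * (π * (q : ℝ)) : ℝ) : ℂ) * I) := by
      rw [hz1, hq]
    have hcos : Real.cos (π * (q : ℝ)) ≠ 0 := by
      intro h0
      have hzm1 : z = -1 := by
        rw [hzq, Complex.exp_mul_I, ← Complex.ofReal_cos, ← Complex.ofReal_sin]
        rw [Real.cos_two_mul, Real.sin_two_mul, h0]
        push_cast
        ring
      rw [hzdef, div_eq_iff (one_sub_I_mul_ne x)] at hzm1
      have := congrArg Complex.re hzm1
      simp at this
      norm_num at this
    refine ⟨q, hcos, ?_⟩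
    have key := lemA (π * (q : ℝ)) hcos
    rw [show ((2 : ℂ) * ↑(π * (q : ℝ)) * I) = ((2 * (π * (q : ℝ)) : ℝ) : ℂ) * I by
      push_cast; ring, ← hzq, hzdef] at key
    exact inj_lem _ _ key.symm
  · rintro ⟨q, hq, hx⟩
    refine ⟨q.den, q.pos, ?_⟩
    rw [ell_coe, hx, lemA _ hq, ← Complex.exp_nat_mul, Complex.exp_eq_one_iff]
    refine ⟨q.num, ?_⟩
    have hqd : (q : ℝ) * q.den = q.num := by
      rw_mod_cast [Rat.mul_den_eq_num]
    have hqdC : ((q : ℝ) : ℂ) * ((q.den : ℝ) : ℂ) = ((q.num : ℝ) : ℂ) := by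
      exact_mod_cast hqd
    push_cast at hqdC ⊢
    linear_combination (2 * ↑π * I) * hqdC
end
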